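/- Let D be a proper subdomain of a Banach space, x ≠ y ∈ D, β a curve in D joining x and y, and γ a λ-curve joining x and y. If ℓ(γ) > ν₁ ℓ(β) with ν₁ ≥ 18e⁹, then for every w ∈ β one has d_D(w) ≤ 2ℓ(β). -/

import Mathlib

open Set Metric MeasureTheory

noncomputable section

variable {E : Type*} [NormedAddCommGroup E]

/-- Distance from a point to the boundary (= complement) of `D`. -/
def dB (D : Set E) (z : E) : ℝ := Metric.infDist z Dᶜ

/-- `D` is a proper subdomain of the ambient space. -/
def IsProperDomain (D : Set E) : Prop := IsOpen D ∧ IsConnected D ∧ Dᶜ.Nonempty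

/-- A rectifiable arc inside `D`, parametrized by arclength on `[a,b]`. -/
structure IsArc (D : Set E) (γ : ℝ → E) (a b : ℝ) : Prop where
  le : a ≤ b
  lip : LipschitzOnWith 1 γ (Set.Icc a b)
  unit : ∀ s t, s ∈ Set.Icc a b → t ∈ Set.Icc a b → s ≤ t →
    eVariationOn γ (Set.Icc s t) = ENNReal.ofReal (t - s)
  mem : ∀ t ∈ Set.Icc a b, γ t ∈ D

/-- Quasihyperbolic length of the piece on `[a,b]` of an arclength-parametrized arc. -/
def qhLen (D : Set E) (γ : ℝ → E) (a b : ℝ) : ℝ := ∫ t in a..b, 1 / dB D (γ t)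

/-- The quasihyperbolic distance in `D`: infimum of quasihyperbolic lengths of
arcs joining the two points. -/
def qhDist (D : Set E) (x y : E) : ℝ :=
  sInf { L : ℝ | ∃ T : ℝ, ∃ γ : ℝ → E,
    IsArc D γ 0 T ∧ γ 0 = x ∧ γ T = y ∧ L = qhLen D γ 0 T }

/-- `γ` is a `c`-quasigeodesic in `D` on `[a,b]`. -/
def IsQuasigeodesicOn (D : Set E) (c : ℝ) (γ : ℝ → E) (a b : ℝ) : Prop :=
  IsArc D γ a b ∧ ∀ s t, s ∈ Set.Icc a b → t ∈ Set.Icc a b → s ≤ t →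
    qhLen D γ s t ≤ c * qhDist D (γ s) (γ t)

/-- The coefficient `c_{x,y}^λ = min (1 + λ/(2 k_D(x,y))) (9/8)`. -/
def cLam (D : Set E) (lam : ℝ) (x y : E) : ℝ :=
  min (1 + lam / (2 * qhDist D x y)) (9 / 8)

/-- `γ` is a `λ`-curve in `D` on `[a,b]`: a `c_{x,y}^λ`-quasigeodesic where `x,y`
are its endpoints. -/
def IsLamCurve (D : Set E) (lam : ℝ) (γ : ℝ → E) (a b : ℝ) : Prop :=
  IsQuasigeodesicOn D (cLam D lam (γ a) (γ b)) γ a b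

/-- `γ` is `h`-short in `D`. -/
def IsShort (D : Set E) (h : ℝ) (γ : ℝ → E) (a b : ℝ) : Prop :=
  IsArc D γ a b ∧ ∀ s t, s ∈ Set.Icc a b → t ∈ Set.Icc a b → s ≤ t →
    qhLen D γ s t ≤ qhDist D (γ s) (γ t) + h

/-- The point `w` lies within quasihyperbolic distance `C` of the union of the
two given sides. -/
def WithinOfSides (D : Set E) (C : ℝ) (w : E) (α : ℝ → E) (a b : ℝ)
    (α' : ℝ → E) (a' b' : ℝ) : Prop :=
  ∃ s : ℝ, (s ∈ Set.Icc a b ∧ qhDist D w (α s) ≤ C) ∨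
    (s ∈ Set.Icc a' b' ∧ qhDist D w (α' s) ≤ C)

/-- `(D, k_D)` is a `(C,h)`-Rips space: every side of an `h`-short triangle lies
in the `C`-neighbourhood of the two other sides. -/
def IsRips (D : Set E) (C h : ℝ) : Prop :=
  ∀ (α₁ α₂ α₃ : ℝ → E) (a₁ b₁ a₂ b₂ a₃ b₃ : ℝ),
    IsShort D h α₁ a₁ b₁ → IsShort D h α₂ a₂ b₂ → IsShort D h α₃ a₃ b₃ →
    α₁ b₁ = α₂ a₂ → α₂ b₂ = α₃ a₃ → α₃ b₃ = α₁ a₁ →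
    (∀ t ∈ Set.Icc a₁ b₁, WithinOfSides D C (α₁ t) α₂ a₂ b₂ α₃ a₃ b₃) ∧
    (∀ t ∈ Set.Icc a₂ b₂, WithinOfSides D C (α₂ t) α₃ a₃ b₃ α₁ a₁ b₁) ∧
    (∀ t ∈ Set.Icc a₃ b₃, WithinOfSides D C (α₃ t) α₁ a₁ b₁ α₂ a₂ b₂)

/-- `D` is `δ`-Gromov hyperbolic with respect to the quasihyperbolic metric. -/
def IsGromovHyp (D : Set E) (δ : ℝ) : Prop :=
  ∀ x ∈ D, ∀ y ∈ D, ∀ z ∈ D, ∀ p ∈ D,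
    min ((qhDist D p x + qhDist D p y - qhDist D x y) / 2)
        ((qhDist D p y + qhDist D p z - qhDist D y z) / 2) - δ ≤
      (qhDist D p x + qhDist D p z - qhDist D x z) / 2

/-- `μ` is a thin-triangles constant for triangles of `c₀`-quasigeodesics in `D`. -/
def ThinTriangles (D : Set E) (c₀ μ : ℝ) : Prop :=
  ∀ (γ₁ γ₂ γ₃ : ℝ → E) (a₁ b₁ a₂ b₂ a₃ b₃ : ℝ),
    IsQuasigeodesicOn D c₀ γ₁ a₁ b₁ → IsQuasigeodesicOn D c₀ γ₂ a₂ b₂ →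
    IsQuasigeodesicOn D c₀ γ₃ a₃ b₃ →
    γ₁ b₁ = γ₂ a₂ → γ₂ b₂ = γ₃ a₃ → γ₃ b₃ = γ₁ a₁ →
    ∀ t ∈ Set.Icc a₁ b₁, WithinOfSides D μ (γ₁ t) γ₂ a₂ b₂ γ₃ a₃ b₃

/-- `D` is a `c`-uniform domain. -/
def IsUniform (D : Set E) (c : ℝ) : Prop :=
  ∀ z₁ ∈ D, ∀ z₂ ∈ D, ∃ γ : ℝ → E, ∃ a b : ℝ, IsArc D γ a b ∧ γ a = z₁ ∧ γ b = z₂ ∧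
    (∀ t ∈ Set.Icc a b, min (t - a) (b - t) ≤ c * dB D (γ t)) ∧
    b - a ≤ c * ‖z₁ - z₂‖

/-- `D` is an `a`-John domain. -/
def IsJohn (D : Set E) (a : ℝ) : Prop :=
  ∀ z₁ ∈ D, ∀ z₂ ∈ D, ∃ γ : ℝ → E, ∃ s t : ℝ, IsArc D γ s t ∧ γ s = z₁ ∧ γ t = z₂ ∧
    ∀ u ∈ Set.Icc s t, min (u - s) (t - u) ≤ a * dB D (γ u)

/-- The inner (length) distance in `D`. -/
def innerDist (D : Set E) (x y : E) : ℝ :=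
  sInf { L : ℝ | ∃ γ : ℝ → E, ∃ s t : ℝ, IsArc D γ s t ∧ γ s = x ∧ γ t = y ∧ L = t - s }

/-- `γ` is an inner `b`-uniform curve in `D`. -/
def IsInnerUniformCurve (D : Set E) (b : ℝ) (γ : ℝ → E) (s t : ℝ) : Prop :=
  (∀ u ∈ Set.Icc s t, min (u - s) (t - u) ≤ b * dB D (γ u)) ∧
  t - s ≤ b * innerDist D (γ s) (γ t)

/-- `D` is an inner `b`-uniform domain. -/
def IsInnerUniform (D : Set E) (b : ℝ) : Prop :=
  ∀ z₁ ∈ D, ∀ z₂ ∈ D, ∃ γ : ℝ → E, ∃ s t : ℝ,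
    IsArc D γ s t ∧ γ s = z₁ ∧ γ t = z₂ ∧ IsInnerUniformCurve D b γ s t

/-- Length (total variation) of a curve on `[a,b]`. -/
def lenOn {F : Type*} [NormedAddCommGroup F] (γ : ℝ → F) (a b : ℝ) : ℝ :=
  (eVariationOn γ (Set.Icc a b)).toReal

variable {F : Type*} [NormedAddCommGroup F]

/-- `f` is a homeomorphism from `D` onto `D'`. -/
def IsHomeoOn (f : E → F) (D : Set E) (D' : Set F) : Prop :=
  ∃ g : F → E, ContinuousOn f D ∧ ContinuousOn g D' ∧ Set.MapsTo f D D' ∧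
    Set.MapsTo g D' D ∧ (∀ x ∈ D, g (f x) = x) ∧ (∀ y ∈ D', f (g y) = y)

/-- `f : D → D'` is `(M,C)`-coarsely quasihyperbolic. -/
def IsCQH (f : E → F) (D : Set E) (D' : Set F) (M C : ℝ) : Prop :=
  ∀ x ∈ D, ∀ y ∈ D,
    (qhDist D x y - C) / M ≤ qhDist D' (f x) (f y) ∧
    qhDist D' (f x) (f y) ≤ M * qhDist D x y + C


private lemma dB_pos {D : Set E} (hO : IsOpen D) (hne : Dᶜ.Nonempty) {z : E} (hz : z ∈ D) :
    0 < dB D z :=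
  (hO.isClosed_compl.notMem_iff_infDist_pos hne).1 (by simpa using hz)

private lemma dB_le {D : Set E} (a b : E) : dB D a ≤ dB D b + dist a b :=
  Metric.infDist_le_infDist_add_dist

private lemma arc_dist_le {D : Set E} {γ : ℝ → E} {a b : ℝ} (h : IsArc D γ a b)
    {s t : ℝ} (hs : s ∈ Set.Icc a b) (ht : t ∈ Set.Icc a b) :
    dist (γ s) (γ t) ≤ |s - t| := by
  have := h.lip.dist_le_mul s hs t ht
  simpa [Real.dist_eq] using this

private lemma cont_one_div_dB {D : Set E} (hO : IsOpen D) (hne : Dᶜ.Nonempty)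
    {γ : ℝ → E} {a b : ℝ} (h : IsArc D γ a b) :
    ContinuousOn (fun t => 1 / dB D (γ t)) (Set.Icc a b) := by
  have hγc : ContinuousOn γ (Set.Icc a b) := h.lip.continuousOn
  have hc : ContinuousOn (fun t => dB D (γ t)) (Set.Icc a b) :=
    (Metric.continuous_infDist_pt Dᶜ).comp_continuousOn hγc
  exact continuousOn_const.div hc fun t ht => (dB_pos hO hne (h.mem t ht)).ne'

private lemma qhLen_nonneg {D : Set E} {γ : ℝ → E} {a b : ℝ} (h : a ≤ b) :
    0 ≤ qhLen D γ a b :=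
  intervalIntegral.integral_nonneg h fun u _ =>
    one_div_nonneg.mpr Metric.infDist_nonneg

private lemma qhDist_le {D : Set E} {x y : E} {T : ℝ} {γ : ℝ → E}
    (h : IsArc D γ 0 T) (h0 : γ 0 = x) (hT : γ T = y) :
    qhDist D x y ≤ qhLen D γ 0 T := by
  apply csInf_le
  · exact ⟨0, fun z hz => by
      obtain ⟨T', γ', hγ', -, -, rfl⟩ := hz
      exact qhLen_nonneg hγ'.le⟩
  · exact ⟨T, γ, h, h0, hT, rfl⟩

private lemma qhDist_nonneg (D : Set E) (x y : E) : 0 ≤ qhDist D x y := by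
  apply Real.sInf_nonneg
  rintro z ⟨T, γ, hγ, -, -, rfl⟩
  exact qhLen_nonneg hγ.le

set_option maxHeartbeats 1000000 in
/-- If a `λ`-curve `γ` from `x` to `y` is much longer than a
curve `β` with the same endpoints (`ℓ(γ) > ν₁ ℓ(β)`, `ν₁ ≥ 18 e⁹`), then every
point of `β` satisfies `d_D(w) ≤ 2 ℓ(β)`. -/
theorem stmt6 [NormedSpace ℝ E] [CompleteSpace E]
    (D : Set E) (hD : IsProperDomain D) (lam ν₁ : ℝ)
    (hlam₀ : 0 < lam) (hlam₁ : lam ≤ 1 / 2) (hν : 18 * Real.exp 9 ≤ ν₁)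
    (x y : E) (hx : x ∈ D) (hy : y ∈ D) (hxy : x ≠ y)
    (β : ℝ → E) (aβ bβ : ℝ) (hβ : IsArc D β aβ bβ) (hβa : β aβ = x) (hβb : β bβ = y)
    (γ : ℝ → E) (aγ bγ : ℝ) (hγ : IsLamCurve D lam γ aγ bγ) (hγa : γ aγ = x) (hγb : γ bγ = y)
    (hlen : ν₁ * (bβ - aβ) < bγ - aγ) :
    ∀ t ∈ Set.Icc aβ bβ, dB D (β t) ≤ 2 * (bβ - aβ) := by
  intro t₀ ht₀
  by_contra hcon
  push_neg at hcon
  obtain ⟨hO, -, hne⟩ := hD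
  set L : ℝ := bβ - aβ with hLdef
  set R : ℝ := dB D (β t₀) with hRdef
  have hR : 2 * L < R := hcon
  have hL0 : 0 < L := by
    rcases eq_or_lt_of_le hβ.le with h | h
    · exact absurd (by rw [← hβa, ← hβb, h]) hxy
    · simpa [hLdef] using sub_pos.mpr h
  have hRL : 0 < R - L := by linarith
  -- every point of β is at distance ≥ R - L from the boundary
  have hlow : ∀ t ∈ Set.Icc aβ bβ, R - L ≤ dB D (β t) := by
    intro t ht
    have hd : dist (β t₀) (β t) ≤ L := by
      refine (arc_dist_le hβ ht₀ ht).trans ?_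
      rw [abs_le]
      constructor <;> [linarith [ht₀.1, ht.2]; linarith [ht₀.2, ht.1]]
    have := dB_le (D := D) (β t₀) (β t)
    simp only [← hRdef] at this
    linarith
  -- the shifted curve β' is an arc from x to y on [0, L]
  set β' : ℝ → E := fun t => β (t + aβ) with hβ'def
  have hmem' : ∀ t ∈ Set.Icc (0 : ℝ) L, t + aβ ∈ Set.Icc aβ bβ := by
    intro t ht
    exact ⟨by linarith [ht.1], by linarith [ht.2]⟩
  have hβ'arc : IsArc D β' 0 L := by
    refine ⟨hL0.le, ?_, ?_, ?_⟩
    · intro u hu v hv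
      have := hβ.lip (hmem' u hu) (hmem' v hv)
      simpa [hβ'def, edist_add_right] using this
    · intro s t hs ht hst
      have hmono : MonotoneOn (fun u : ℝ => u + aβ) (Set.Icc s t) :=
        (monotone_id.add_const aβ).monotoneOn _
      have hcomp := eVariationOn.comp_eq_of_monotoneOn β (fun u : ℝ => u + aβ) hmono
      have himg : (fun u : ℝ => u + aβ) '' Set.Icc s t = Set.Icc (s + aβ) (t + aβ) :=
        Set.image_add_const_Icc _ _ _
      have hsub : Set.Icc s t ⊆ Set.Icc (0 : ℝ) L := Set.Icc_subset_Icc hs.1 ht.2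
      have : eVariationOn β' (Set.Icc s t) = eVariationOn β (Set.Icc (s + aβ) (t + aβ)) := by
        rw [hβ'def]
        rw [show (fun u : ℝ => β (u + aβ)) = β ∘ (fun u : ℝ => u + aβ) from rfl]
        rw [hcomp, himg]
      rw [this, hβ.unit (s + aβ) (t + aβ) (hmem' s hs) (hmem' t ht) (by linarith)]
      ring_nf
    · intro t ht
      exact hβ.mem _ (hmem' t ht)
  have hβ'0 : β' 0 = x := by simp [hβ'def, hβa]
  have hβ'L : β' L = y := by
    have : L + aβ = bβ := by simp [hLdef]
    simp [hβ'def, this, hβb]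
  -- quasihyperbolic length of β is at most L / (R - L)
  have hlenβ' : qhLen D β' 0 L = qhLen D β aβ bβ := by
    have := intervalIntegral.integral_comp_add_right (a := (0:ℝ)) (b := L)
      (fun t => 1 / dB D (β t)) aβ
    simpa [qhLen, hβ'def, hLdef] using this
  have hqhβ : qhLen D β aβ bβ ≤ L / (R - L) := by
    have hint : IntervalIntegrable (fun t => 1 / dB D (β t)) volume aβ bβ :=
      (cont_one_div_dB hO hne hβ).intervalIntegrable_of_Icc hβ.le
    have hintc : IntervalIntegrable (fun _ : ℝ => 1 / (R - L)) volume aβ bβ :=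
      intervalIntegrable_const
    have hmono := intervalIntegral.integral_mono_on hβ.le hint hintc
      (fun t ht => one_div_le_one_div_of_le hRL (hlow t ht))
    have hc : (∫ _ in aβ..bβ, 1 / (R - L)) = L * (1 / (R - L)) := by
      simp [hLdef, smul_eq_mul]
    rw [qhLen]
    rw [hc] at hmono
    calc (∫ t in aβ..bβ, 1 / dB D (β t)) ≤ L * (1 / (R - L)) := hmono
    _ = L / (R - L) := by ring
  have hK : qhDist D x y ≤ L / (R - L) := by
    calc qhDist D x y ≤ qhLen D β' 0 L := qhDist_le hβ'arc hβ'0 hβ'L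
    _ = qhLen D β aβ bβ := hlenβ'
    _ ≤ L / (R - L) := hqhβ
  have hK0 : 0 ≤ qhDist D x y := qhDist_nonneg D x y
  -- quasihyperbolic length of γ is at most (9/8) * qhDist x y
  have hγle : qhLen D γ aγ bγ ≤ 9 / 8 * qhDist D x y := by
    have h1 := hγ.2 aγ bγ (Set.left_mem_Icc.mpr hγ.1.le) (Set.right_mem_Icc.mpr hγ.1.le)
      hγ.1.le
    rw [hγa, hγb] at h1
    calc qhLen D γ aγ bγ ≤ cLam D lam x y * qhDist D x y := h1
    _ ≤ 9 / 8 * qhDist D x y :=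
        mul_le_mul_of_nonneg_right (min_le_right _ _) hK0
  -- lower bound for the quasihyperbolic length of γ
  set T : ℝ := bγ - aγ with hTdef
  have hν180 : (180 : ℝ) ≤ ν₁ := by
    have h9 : (10 : ℝ) ≤ Real.exp 9 := by
      have := Real.add_one_le_exp (9 : ℝ); linarith
    linarith
  have hT0 : 0 < T := by nlinarith
  set d : ℝ := dB D x with hddef
  have hd0 : 0 < d := dB_pos hO hne hx
  -- d ≤ R + L
  have hdRL : d ≤ R + L := by
    have h1 : dist x (β t₀) ≤ L := by
      rw [← hβa]
      refine (arc_dist_le hβ (Set.left_mem_Icc.mpr hβ.le) ht₀).trans ?_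
      rw [abs_le]
      constructor <;> [linarith [ht₀.2]; linarith [ht₀.1]]
    have := dB_le (D := D) x (β t₀)
    simp only [← hRdef, ← hddef] at this
    linarith
  -- lower bound for qhLen γ : log ((d + T)/d) ≤ qhLen γ
  have hloglen : Real.log ((d + T) / d) ≤ qhLen D γ aγ bγ := by
    have hub : ∀ t ∈ Set.Icc aγ bγ, 1 / (t + (d - aγ)) ≤ 1 / dB D (γ t) := by
      intro t ht
      have hpos : 0 < dB D (γ t) := dB_pos hO hne (hγ.1.mem t ht)
      have hdist : dist (γ t) x ≤ t - aγ := by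
        rw [← hγa]
        refine (arc_dist_le hγ.1 ht (Set.left_mem_Icc.mpr hγ.1.le)).trans ?_
        rw [abs_le]
        constructor <;> [linarith [ht.1]; linarith [ht.1]]
      have hle : dB D (γ t) ≤ t + (d - aγ) := by
        have := dB_le (D := D) (γ t) x
        simp only [← hddef] at this
        linarith
      exact one_div_le_one_div_of_le hpos hle
    have hint1 : IntervalIntegrable (fun t => 1 / (t + (d - aγ))) volume aγ bγ := by
      apply ContinuousOn.intervalIntegrable_of_Icc hγ.1.le
      refine continuousOn_const.div ((continuous_id.add continuous_const).continuousOn) ?_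
      intro t ht
      have h1 := ht.1
      have : (0:ℝ) < t + (d - aγ) := by linarith
      exact ne_of_gt this
    have hint2 : IntervalIntegrable (fun t => 1 / dB D (γ t)) volume aγ bγ :=
      (cont_one_div_dB hO hne hγ.1).intervalIntegrable_of_Icc hγ.1.le
    have hmono := intervalIntegral.integral_mono_on hγ.1.le hint1 hint2 hub
    have hcalc : (∫ t in aγ..bγ, 1 / (t + (d - aγ))) = Real.log ((d + T) / d) := by
      have h1 := intervalIntegral.integral_comp_add_right (a := aγ) (b := bγ)
        (fun u => 1 / u) (d - aγ)
      have h2 : aγ + (d - aγ) = d := by ring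
      have h3 : bγ + (d - aγ) = d + T := by rw [hTdef]; ring
      have h0 : (0:ℝ) ∉ Set.uIcc d (d + T) := by
        rw [Set.uIcc_of_le (by linarith)]
        intro h0
        rw [Set.mem_Icc] at h0
        linarith [h0.1]
      rw [h1, h2, h3, integral_one_div h0]
    rw [qhLen, ← hcalc]
    exact hmono
  -- combine everything
  have hmain : Real.log (1 + ν₁ * L / (R + L)) ≤ 9 / 8 * (L / (R - L)) := by
    have h1 : Real.log (1 + ν₁ * L / (R + L)) ≤ Real.log ((d + T) / d) := by
      have hfr : 0 < ν₁ * L / (R + L) := div_pos (by nlinarith) (by linarith)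
      have hs0 : 0 < 1 + ν₁ * L / (R + L) := by linarith
      apply Real.log_le_log hs0
      have h2 : (d + T) / d = 1 + T / d := by field_simp
      rw [h2]
      have : ν₁ * L / (R + L) ≤ T / d := by
        apply div_le_div₀ (le_of_lt hT0) (le_of_lt hlen) hd0 hdRL
      linarith
    calc Real.log (1 + ν₁ * L / (R + L)) ≤ Real.log ((d + T) / d) := h1
    _ ≤ qhLen D γ aγ bγ := hloglen
    _ ≤ 9 / 8 * qhDist D x y := hγle
    _ ≤ 9 / 8 * (L / (R - L)) := by linarith
  have hRHS : 9 / 8 * (L / (R - L)) < 9 / 8 := by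
    have : L / (R - L) < 1 := (div_lt_one hRL).mpr (by linarith)
    linarith
  set s : ℝ := ν₁ * L / (R + L) with hsdef
  have hs0 : 0 < s := div_pos (by nlinarith) (by linarith)
  rcases le_or_gt R (ν₁ * L / 20) with hcase | hcase
  · -- R small: the log is at least 2
    have hs10 : (10 : ℝ) ≤ s := by
      have hden : R + L ≤ ν₁ * L / 10 := by nlinarith
      rw [hsdef, le_div_iff₀ (by linarith : (0:ℝ) < R + L)]
      nlinarith
    have hlog11 : (2 : ℝ) ≤ Real.log 11 := by
      rw [Real.le_log_iff_exp_le (by norm_num)]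
      have he : Real.exp 2 = Real.exp 1 * Real.exp 1 := by
        rw [← Real.exp_add]; norm_num
      nlinarith [Real.exp_one_lt_d9, Real.exp_pos 1]
    have : Real.log 11 ≤ Real.log (1 + s) :=
      Real.log_le_log (by norm_num) (by linarith)
    linarith
  · -- R large: use log (1+s) ≥ s/(1+s)
    have hlogs : s / (1 + s) ≤ Real.log (1 + s) := by
      have h := Real.log_le_sub_one_of_pos (show (0:ℝ) < (1 + s)⁻¹ by positivity)
      rw [Real.log_inv] at h
      have heq : 1 - (1 + s)⁻¹ = s / (1 + s) := by field_simp; ring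
      linarith
    have hfrac : s / (1 + s) = ν₁ * L / (R + L + ν₁ * L) := by
      rw [hsdef]
      have hRL' : (0:ℝ) < R + L := by linarith
      field_simp
    have hkey : 9 / 8 * (L / (R - L)) < ν₁ * L / (R + L + ν₁ * L) := by
      have hB : (0:ℝ) < R + L + ν₁ * L := by nlinarith
      have hre : 9 / 8 * (L / (R - L)) = 9 / 8 * L / (R - L) := by ring
      rw [hre, div_lt_div_iff₀ hRL hB]
      clear_value s
      clear_value L R T d
      have h20 : ν₁ * L ≤ 20 * R := by nlinarith [hcase]
      have hR0 : (0:ℝ) < R := by linarith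
      have p1 : ν₁ * L * L ≤ 20 * R * L := mul_le_mul_of_nonneg_right h20 hL0.le
      have p2 : 180 * (L * R) ≤ ν₁ * (L * R) :=
        mul_le_mul_of_nonneg_right hν180 (mul_nonneg hL0.le hR0.le)
      have p3 : 2 * L * L < R * L := mul_lt_mul_of_pos_right hR hL0
      linarith [p1, p2, p3, mul_pos hL0 hR0]
    rw [hfrac] at hlogs
    linarith


end
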